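/- arXiv:math/0511463 — 2 statements merged into one kernel-verified Lean document; each statement's English description precedes it below -/
import Mathlib

section
/- Let L be a free ℤ-module with a positive definite inner product, and let α be a nonzero element of L of minimal norm among nonzero elements. Let T be another free ℤ-module with a positive definite inner product, and let f, g : L ⊗ ℝ → T ⊗ ℝ be linear maps sending L into T, each admitting an adjoint f*, g* : T ⊗ ℝ → L ⊗ ℝ (mapping T into L) with f* ∘ f = r·id and g* ∘ g = r·id for an integer r ≥ 1. If f(α) ≠ g(α), then ‖f(α) - g(α)‖ ≥ ‖α‖ / √r. -/
open scoped InnerProductSpace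

/-- Distance estimate (Proposition 3.2, abstract form): if `α` is a nonzero lattice
element of minimal norm in `L`, and `f, g` are lattice-preserving maps of degree `r`
(i.e. with adjoints `f', g'` mapping `T` into `L` and `f' ∘ f = r·id = g' ∘ g`) with
`f(α) ≠ g(α)`, then `‖f(α) - g(α)‖ ≥ ‖α‖/√r`. -/
theorem distance_estimate {V W : Type*} [NormedAddCommGroup V] [InnerProductSpace ℝ V]
    [NormedAddCommGroup W] [InnerProductSpace ℝ W]
    [FiniteDimensional ℝ V] [FiniteDimensional ℝ W]
    (L : Submodule ℤ V) (T : Submodule ℤ W)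
    (f g : V →ₗ[ℝ] W) (f' g' : W →ₗ[ℝ] V)
    (hfL : ∀ x ∈ L, f x ∈ T) (hgL : ∀ x ∈ L, g x ∈ T)
    (hf'T : ∀ y ∈ T, f' y ∈ L) (hg'T : ∀ y ∈ T, g' y ∈ L)
    (hadjf : ∀ (x : V) (y : W), ⟪f x, y⟫_ℝ = ⟪x, f' y⟫_ℝ)
    (hadjg : ∀ (x : V) (y : W), ⟪g x, y⟫_ℝ = ⟪x, g' y⟫_ℝ)
    (r : ℤ) (hr : 1 ≤ r)
    (hff : ∀ x : V, f' (f x) = (r : ℝ) • x)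
    (hgg : ∀ x : V, g' (g x) = (r : ℝ) • x)
    (α : V) (hαL : α ∈ L) (hα0 : α ≠ 0)
    (hmin : ∀ x ∈ L, x ≠ 0 → ‖α‖ ≤ ‖x‖)
    (hne : f α ≠ g α) :
    ‖α‖ / Real.sqrt (r : ℝ) ≤ ‖f α - g α‖ := by

  set β := f α - g α with hβdef
  have hβT : β ∈ T := Submodule.sub_mem T (hfL α hαL) (hgL α hαL)
  have hβ0 : β ≠ 0 := sub_ne_zero.mpr hne
  have hr0 : (0:ℝ) ≤ (r:ℝ) := by exact_mod_cast (zero_le_one.trans hr)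
  have hrpos : (0:ℝ) < Real.sqrt (r:ℝ) :=
    Real.sqrt_pos.mpr (by exact_mod_cast lt_of_lt_of_le one_pos hr)
  have hnormf : ∀ x : V, ‖f x‖ = Real.sqrt (r:ℝ) * ‖x‖ := by
    intro x
    have h1 : ‖f x‖ ^ 2 = (r:ℝ) * ‖x‖ ^ 2 := by
      rw [← real_inner_self_eq_norm_sq, hadjf, hff, real_inner_smul_right,
        real_inner_self_eq_norm_sq]
    have h2 := congrArg Real.sqrt h1
    rwa [Real.sqrt_sq (norm_nonneg _), Real.sqrt_mul hr0,
      Real.sqrt_sq (norm_nonneg _)] at h2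
  have hnormg : ∀ x : V, ‖g x‖ = Real.sqrt (r:ℝ) * ‖x‖ := by
    intro x
    have h1 : ‖g x‖ ^ 2 = (r:ℝ) * ‖x‖ ^ 2 := by
      rw [← real_inner_self_eq_norm_sq, hadjg, hgg, real_inner_smul_right,
        real_inner_self_eq_norm_sq]
    have h2 := congrArg Real.sqrt h1
    rwa [Real.sqrt_sq (norm_nonneg _), Real.sqrt_mul hr0,
      Real.sqrt_sq (norm_nonneg _)] at h2
  have bound_f : ‖f' β‖ ≤ Real.sqrt (r:ℝ) * ‖β‖ := by
    have h1 : ‖f' β‖ ^ 2 ≤ ‖f (f' β)‖ * ‖β‖ := by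
      rw [← real_inner_self_eq_norm_sq, ← hadjf]
      exact real_inner_le_norm _ _
    rw [hnormf] at h1
    rcases eq_or_ne (f' β) 0 with hz | hz
    · rw [hz, norm_zero]; positivity
    · have hp : 0 < ‖f' β‖ := norm_pos_iff.mpr hz
      nlinarith
  have bound_g : ‖g' β‖ ≤ Real.sqrt (r:ℝ) * ‖β‖ := by
    have h1 : ‖g' β‖ ^ 2 ≤ ‖g (g' β)‖ * ‖β‖ := by
      rw [← real_inner_self_eq_norm_sq, ← hadjg]
      exact real_inner_le_norm _ _
    rw [hnormg] at h1
    rcases eq_or_ne (g' β) 0 with hz | hz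
    · rw [hz, norm_zero]; positivity
    · have hp : 0 < ‖g' β‖ := norm_pos_iff.mpr hz
      nlinarith
  have hne' : f' β ≠ g' β := by
    intro h
    have hkey : ⟪α, f' β - g' β⟫_ℝ = ‖β‖ ^ 2 := by
      rw [inner_sub_right, ← hadjf, ← hadjg, ← inner_sub_left,
        real_inner_self_eq_norm_sq]
    rw [h, sub_self, inner_zero_right] at hkey
    exact (pow_ne_zero 2 (norm_ne_zero_iff.mpr hβ0)) hkey.symm
  obtain ⟨γ, hγL, hγ0, hγb⟩ : ∃ γ, γ ∈ L ∧ γ ≠ 0 ∧ ‖γ‖ ≤ Real.sqrt (r:ℝ) * ‖β‖ := by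
    rcases eq_or_ne (f' β) 0 with h | h
    · refine ⟨g' β, hg'T β hβT, ?_, bound_g⟩
      rw [h] at hne'
      exact fun hc => hne' hc.symm
    · exact ⟨f' β, hf'T β hβT, h, bound_f⟩
  have hαγ := hmin γ hγL hγ0
  rw [div_le_iff₀ hrpos, mul_comm]
  linarith
end

section
/- Let V, W be finite-dimensional complex inner product spaces with lattices L_V ⊂ V, L_W ⊂ W (full-rank ℤ-lattices). Let f, g : W → V be linear maps sending L_W into L_V, with adjoints f*, g* : V → W sending L_V into L_W, satisfying f* ∘ f = r·id_W and g* ∘ g = r·id_W for an integer r ≥ 1. Let d > 2r be an integer, and suppose f(λ) − g(λ) ∈ d·L_V for all λ ∈ L_W. Then f = g. -/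
open scoped InnerProductSpace

/-- Torsion lemma (Lemma 6.1, abstract form): let `L_V ⊂ V`, `L_W ⊂ W` be full-rank
lattices in finite-dimensional complex inner product spaces, and `f, g : W → V`
lattice-preserving maps with lattice-preserving adjoints `f', g'` satisfying
`f' ∘ f = r·id_W = g' ∘ g` for an integer `r ≥ 1`. If `d > 2r` is an integer and
`f(λ) - g(λ) ∈ d·L_V` for all `λ ∈ L_W`, then `f = g`. -/
theorem torsion_lemma {V W : Type*} [NormedAddCommGroup V] [InnerProductSpace ℂ V]
    [NormedAddCommGroup W] [InnerProductSpace ℂ W]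
    [FiniteDimensional ℂ V] [FiniteDimensional ℂ W]
    (LV : Submodule ℤ V) (LW : Submodule ℤ W)
    [DiscreteTopology LV] [DiscreteTopology LW]
    (hLV : Submodule.span ℂ (LV : Set V) = ⊤)
    (hLW : Submodule.span ℂ (LW : Set W) = ⊤)
    (f g : W →ₗ[ℂ] V) (f' g' : V →ₗ[ℂ] W)
    (hf : ∀ x ∈ LW, f x ∈ LV) (hg : ∀ x ∈ LW, g x ∈ LV)
    (hf' : ∀ y ∈ LV, f' y ∈ LW) (hg' : ∀ y ∈ LV, g' y ∈ LW)
    (hadjf : ∀ (w : W) (v : V), ⟪f w, v⟫_ℂ = ⟪w, f' v⟫_ℂ)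
    (hadjg : ∀ (w : W) (v : V), ⟪g w, v⟫_ℂ = ⟪w, g' v⟫_ℂ)
    (r : ℤ) (hr : 1 ≤ r)
    (hff : ∀ w : W, f' (f w) = (r : ℂ) • w)
    (hgg : ∀ w : W, g' (g w) = (r : ℂ) • w)
    (d : ℤ) (hd : 2 * r < d)
    (hcong : ∀ x ∈ LW, ∃ y ∈ LV, f x - g x = (d : ℂ) • y) :
    f = g := by
  -- basic positivity facts
  have hr0 : (0:ℝ) < (r:ℝ) := by exact_mod_cast lt_of_lt_of_le one_pos hr
  have hdz : (0:ℤ) < d := by linarith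
  have hd0 : (0:ℝ) < (d:ℝ) := by exact_mod_cast hdz
  set s : ℝ := Real.sqrt (r:ℝ) with hs
  have hs0 : 0 < s := Real.sqrt_pos.mpr hr0
  have hss : s * s = (r:ℝ) := Real.mul_self_sqrt hr0.le
  -- exact norm of f and g
  have hfn : ∀ w : W, ‖f w‖ = s * ‖w‖ := by
    intro w
    have h1 : ⟪f w, f w⟫_ℂ = (r:ℂ) * ⟪w, w⟫_ℂ := by
      rw [hadjf, hff, inner_smul_right]
    have ha : ‖⟪f w, f w⟫_ℂ‖ = ‖f w‖^2 := by
      rw [inner_self_eq_norm_sq_to_K, norm_pow, RCLike.norm_ofReal,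
        abs_of_nonneg (norm_nonneg _)]
    have hb : ‖⟪w, w⟫_ℂ‖ = ‖w‖^2 := by
      rw [inner_self_eq_norm_sq_to_K, norm_pow, RCLike.norm_ofReal,
        abs_of_nonneg (norm_nonneg _)]
    have h2 := congrArg norm h1
    rw [norm_mul, ha, hb, Complex.norm_intCast,
      abs_of_pos (by exact_mod_cast lt_of_lt_of_le one_pos hr : (0:ℝ) < (r:ℝ))] at h2
    have h3 : ‖f w‖^2 = (r:ℝ) * ‖w‖^2 := h2
    have h4 : ‖f w‖ = Real.sqrt ((r:ℝ) * ‖w‖^2) := by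
      rw [← h3, Real.sqrt_sq (norm_nonneg _)]
    rw [h4, Real.sqrt_mul hr0.le, Real.sqrt_sq (norm_nonneg _)]
  have hgn : ∀ w : W, ‖g w‖ = s * ‖w‖ := by
    intro w
    have h1 : ⟪g w, g w⟫_ℂ = (r:ℂ) * ⟪w, w⟫_ℂ := by
      rw [hadjg, hgg, inner_smul_right]
    have ha : ‖⟪g w, g w⟫_ℂ‖ = ‖g w‖^2 := by
      rw [inner_self_eq_norm_sq_to_K, norm_pow, RCLike.norm_ofReal,
        abs_of_nonneg (norm_nonneg _)]
    have hb : ‖⟪w, w⟫_ℂ‖ = ‖w‖^2 := by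
      rw [inner_self_eq_norm_sq_to_K, norm_pow, RCLike.norm_ofReal,
        abs_of_nonneg (norm_nonneg _)]
    have h2 := congrArg norm h1
    rw [norm_mul, ha, hb, Complex.norm_intCast,
      abs_of_pos (by exact_mod_cast lt_of_lt_of_le one_pos hr : (0:ℝ) < (r:ℝ))] at h2
    have h3 : ‖g w‖^2 = (r:ℝ) * ‖w‖^2 := h2
    have h4 : ‖g w‖ = Real.sqrt ((r:ℝ) * ‖w‖^2) := by
      rw [← h3, Real.sqrt_sq (norm_nonneg _)]
    rw [h4, Real.sqrt_mul hr0.le, Real.sqrt_sq (norm_nonneg _)]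
  -- norm bound for the adjoints
  have hfn' : ∀ v : V, ‖f' v‖ ≤ s * ‖v‖ := by
    intro v
    rcases eq_or_ne (f' v) 0 with h | h
    · rw [h, norm_zero]; positivity
    · have h1 : ⟪f (f' v), v⟫_ℂ = ⟪f' v, f' v⟫_ℂ := hadjf _ _
      have h2 : ‖f' v‖^2 ≤ ‖f (f' v)‖ * ‖v‖ := by
        calc ‖f' v‖^2 = ‖⟪f' v, f' v⟫_ℂ‖ := by
              rw [inner_self_eq_norm_sq_to_K, norm_pow, RCLike.norm_ofReal,
                abs_of_nonneg (norm_nonneg _)]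
          _ = ‖⟪f (f' v), v⟫_ℂ‖ := by rw [h1]
          _ ≤ _ := norm_inner_le_norm _ _
      rw [hfn] at h2
      have hpos : 0 < ‖f' v‖ := norm_pos_iff.mpr h
      nlinarith
  have hgn' : ∀ v : V, ‖g' v‖ ≤ s * ‖v‖ := by
    intro v
    rcases eq_or_ne (g' v) 0 with h | h
    · rw [h, norm_zero]; positivity
    · have h1 : ⟪g (g' v), v⟫_ℂ = ⟪g' v, g' v⟫_ℂ := hadjg _ _
      have h2 : ‖g' v‖^2 ≤ ‖g (g' v)‖ * ‖v‖ := by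
        calc ‖g' v‖^2 = ‖⟪g' v, g' v⟫_ℂ‖ := by
              rw [inner_self_eq_norm_sq_to_K, norm_pow, RCLike.norm_ofReal,
                abs_of_nonneg (norm_nonneg _)]
          _ = ‖⟪g (g' v), v⟫_ℂ‖ := by rw [h1]
          _ ≤ _ := norm_inner_le_norm _ _
      rw [hgn] at h2
      have hpos : 0 < ‖g' v‖ := norm_pos_iff.mpr h
      nlinarith
  set q : ℝ := 2 * (r:ℝ) / (d:ℝ) with hq
  have hq0 : 0 ≤ q := by positivity
  have hq1 : q < 1 := by
    rw [hq, div_lt_one hd0]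
    exact_mod_cast hd
  -- the key descent step
  have hstep : ∀ μ : W, μ ∈ LW → f μ ≠ g μ →
      ∃ ν : W, ν ∈ LW ∧ f ν ≠ g ν ∧ ‖ν‖ ≤ q * ‖μ‖ := by
    intro μ hμL hμne
    obtain ⟨σ, hσL, hσ⟩ := hcong μ hμL
    have hdC : ((d:ℂ)) ≠ 0 := by exact_mod_cast hdz.ne'
    -- norm bound on σ
    have hσn : (d:ℝ) * ‖σ‖ ≤ 2 * s * ‖μ‖ := by
      have h1 : ‖f μ - g μ‖ ≤ ‖f μ‖ + ‖g μ‖ := norm_sub_le _ _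
      rw [hσ, norm_smul] at h1
      have h2 : ‖(d:ℂ)‖ = (d:ℝ) := by
        rw [Complex.norm_intCast]
        exact abs_of_pos (by exact_mod_cast hdz)
      rw [h2, hfn, hgn] at h1
      linarith
    -- if both f' σ = 0 and g' σ = 0 then f μ = g μ
    have hD : f' σ = 0 → g' σ = 0 → False := by
      intro h1 h2
      apply hμne
      have e1 : f' (g μ) = (r:ℂ) • μ := by
        have h3 : f' (f μ - g μ) = 0 := by rw [hσ, map_smul, h1, smul_zero]
        rw [map_sub, sub_eq_zero, hff] at h3
        exact h3.symm
      have e2 : g' (f μ) = (r:ℂ) • μ := by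
        have h3 : g' (f μ - g μ) = 0 := by rw [hσ, map_smul, h2, smul_zero]
        rw [map_sub, sub_eq_zero, hgg] at h3
        exact h3
      have h4 : ⟪f μ - g μ, f μ - g μ⟫_ℂ = 0 := by
        simp only [inner_sub_left, inner_sub_right, hadjf, hadjg, e1, e2, hff, hgg]
        ring
      rw [inner_self_eq_zero, sub_eq_zero] at h4
      exact h4
    -- a chosen ν = f' σ or g' σ cannot satisfy f ν = g ν unless it is zero
    have hF : f (f' σ) = g (f' σ) → f' σ = 0 := by
      intro hνeq
      set ν := f' σ with hν
      have e0 : (d:ℂ) • ν = f' (f μ - g μ) := by rw [hσ, map_smul]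
      have h1 : (d:ℂ) * ⟪ν, ν⟫_ℂ = ⟪ν, f' (f μ - g μ)⟫_ℂ := by
        rw [← e0, inner_smul_right]
      have h2 : ⟪ν, f' (f μ - g μ)⟫_ℂ = 0 := by
        rw [← hadjf, inner_sub_right]
        nth_rewrite 2 [hνeq]
        rw [hadjf, hadjg, hff, hgg, sub_self]
      rw [h2, mul_eq_zero] at h1
      rcases h1 with h1 | h1
      · exact absurd h1 hdC
      · rwa [inner_self_eq_zero] at h1
    have hG : f (g' σ) = g (g' σ) → g' σ = 0 := by
      intro hνeq
      set ν := g' σ with hν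
      have e0 : (d:ℂ) • ν = g' (f μ - g μ) := by rw [hσ, map_smul]
      have h1 : (d:ℂ) * ⟪ν, ν⟫_ℂ = ⟪ν, g' (f μ - g μ)⟫_ℂ := by
        rw [← e0, inner_smul_right]
      have h2 : ⟪ν, g' (f μ - g μ)⟫_ℂ = 0 := by
        rw [← hadjg, inner_sub_right]
        nth_rewrite 1 [← hνeq]
        rw [hadjf, hadjg, hff, hgg, sub_self]
      rw [h2, mul_eq_zero] at h1
      rcases h1 with h1 | h1
      · exact absurd h1 hdC
      · rwa [inner_self_eq_zero] at h1
    by_cases hfσ : f' σ = 0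
    · -- use ν = g' σ
      have hgσ : g' σ ≠ 0 := fun h => hD hfσ h
      refine ⟨g' σ, hg' σ hσL, fun h => hgσ (hG h), ?_⟩
      have h1 := hgn' σ
      rw [hq]
      rw [div_mul_eq_mul_div, le_div_iff₀ hd0]
      nlinarith [norm_nonneg (g' σ), norm_nonneg σ, norm_nonneg μ]
    · refine ⟨f' σ, hf' σ hσL, fun h => hfσ (hF h), ?_⟩
      have h1 := hfn' σ
      rw [hq]
      rw [div_mul_eq_mul_div, le_div_iff₀ hd0]
      nlinarith [norm_nonneg (f' σ), norm_nonneg σ, norm_nonneg μ]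
  -- discreteness of L_W gives a uniform gap around 0
  obtain ⟨ε, hε, hball⟩ : ∃ ε > 0, ∀ x : W, x ∈ LW → ‖x‖ < ε → x = 0 := by
    have hop : IsOpen ({0} : Set LW) := isOpen_discrete _
    rcases Metric.isOpen_iff.mp hop 0 rfl with ⟨ε, hε, hb⟩
    refine ⟨ε, hε, fun x hx hxn => ?_⟩
    have hmem : (⟨x, hx⟩ : LW) ∈ Metric.ball (0:LW) ε := by
      rw [Metric.mem_ball, Subtype.dist_eq]
      simpa [dist_eq_norm] using hxn
    have := hb hmem
    simpa using congrArg Subtype.val this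
  -- main argument: f and g agree on L_W
  have main : Set.EqOn f g (LW : Set W) := by
    intro μ₀ hμ₀L
    by_contra hμ₀
    have hμ₀pos : 0 < ‖μ₀‖ := by
      rcases eq_or_ne μ₀ 0 with h | h
      · exact absurd (by rw [h, map_zero, map_zero]) hμ₀
      · exact norm_pos_iff.mpr h
    have hstep' : ∀ x : {x : W // x ∈ LW ∧ f x ≠ g x},
        ∃ y : {x : W // x ∈ LW ∧ f x ≠ g x}, ‖(y:W)‖ ≤ q * ‖(x:W)‖ := by
      rintro ⟨x, hxL, hxne⟩
      obtain ⟨ν, h1, h2, h3⟩ := hstep x hxL hxne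
      exact ⟨⟨ν, h1, h2⟩, h3⟩
    choose T hT using hstep'
    set a : ℕ → {x : W // x ∈ LW ∧ f x ≠ g x} :=
      fun n => T^[n] ⟨μ₀, hμ₀L, hμ₀⟩ with ha'
    have ha : ∀ n, ‖(a n : W)‖ ≤ q^n * ‖μ₀‖ := by
      intro n
      induction n with
      | zero => simp [ha']
      | succ n ih =>
        have he : a (n+1) = T (a n) := Function.iterate_succ_apply' T _ _
        rw [he]
        calc ‖(T (a n) : W)‖ ≤ q * ‖(a n : W)‖ := hT _
          _ ≤ q * (q^n * ‖μ₀‖) := mul_le_mul_of_nonneg_left ih hq0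
          _ = q^(n+1) * ‖μ₀‖ := by ring
    obtain ⟨n, hn⟩ := exists_pow_lt_of_lt_one (div_pos hε hμ₀pos) hq1
    have hlt : ‖(a n : W)‖ < ε :=
      lt_of_le_of_lt (ha n) ((lt_div_iff₀ hμ₀pos).mp hn)
    have hz := hball _ (a n).2.1 hlt
    exact (a n).2.2 (by rw [hz, map_zero, map_zero])
  exact LinearMap.ext_on hLW main
end
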